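/- Define A(q_1,...,q_k) = ∑ e(∑_{i=1}^k d_i a_i / q_i), where the sum is over tuples (a_1,...,a_k) with 1 ≤ a_i ≤ q_i, gcd(a_i, q_i) = 1, and ∑ a_i/q_i ∈ ℤ, and e(θ) = exp(2πiθ). If q_i = q_i' q_i'' for each i with gcd(∏ q_i', ∏ q_i'') = 1, then A(q_1,...,q_k) = A(q_1',...,q_k')·A(q_1'',...,q_k''). -/

import Mathlib

open Finset

/-- The Hardy–Littlewood exponential sum `A(q₁,…,q_k)` attached to the tuple `d`. -/
noncomputable def HLA (k : ℕ) (d : Fin k → ℤ) (q : Fin k → ℕ) : ℂ :=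
  ∑ a ∈ (Fintype.piFinset fun i => Finset.Icc 1 (q i)).filter
      (fun a => (∀ i, Nat.gcd (a i) (q i) = 1) ∧ (∑ i, (a i : ℚ) / (q i : ℚ)).den = 1),
    Complex.exp (2 * Real.pi * Complex.I * ∑ i, (d i : ℂ) * (a i : ℂ) / (q i : ℂ))

private lemma den_add_intCast (r : ℚ) (n : ℤ) : (r + n).den = r.den := by
  refine Nat.dvd_antisymm ?_ ?_
  · simpa using Rat.add_den_dvd r n
  · have h := Rat.add_den_dvd (r + n) ((-n : ℤ) : ℚ)
    push_cast at h
    simpa using h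

private lemma sum_shift {k : ℕ} (u v : Fin k → ℚ) (m : Fin k → ℤ)
    (h : ∀ i, u i = v i + m i) :
    ∑ i, u i = ∑ i, v i + ((∑ i, m i : ℤ) : ℚ) := by
  push_cast
  rw [← Finset.sum_add_distrib]
  exact Finset.sum_congr rfl fun i _ => h i

private lemma den_shift {k : ℕ} (u v : Fin k → ℚ) (m : Fin k → ℤ)
    (h : ∀ i, u i = v i + m i) :
    (∑ i, u i).den = (∑ i, v i).den := by
  rw [sum_shift u v m h, den_add_intCast]

private lemma exp_shift (r s : ℚ) (n : ℤ) (h : r = s + n) :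
    Complex.exp (2 * Real.pi * Complex.I * (r : ℂ)) =
      Complex.exp (2 * Real.pi * Complex.I * (s : ℂ)) := by
  subst h
  push_cast
  rw [mul_add, Complex.exp_add]
  have h1 : Complex.exp (2 * Real.pi * Complex.I * (n : ℂ)) = 1 := by
    rw [show (2 * (Real.pi : ℂ) * Complex.I * (n : ℂ))
        = (n : ℂ) * (2 * Real.pi * Complex.I) by ring]
    exact Complex.exp_int_mul_two_pi_mul_I n
  rw [h1, mul_one]

private lemma exp_shift_sum {k : ℕ} (u v : Fin k → ℚ) (m : Fin k → ℤ)
    (h : ∀ i, u i = v i + m i) :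
    Complex.exp (2 * Real.pi * Complex.I * ((∑ i, u i : ℚ) : ℂ)) =
      Complex.exp (2 * Real.pi * Complex.I * ((∑ i, v i : ℚ) : ℂ)) :=
  exp_shift _ _ (∑ i, m i) (sum_shift u v m h)

private lemma den_div_dvd (a q : ℕ) : ((a : ℚ) / (q : ℚ)).den ∣ q := by
  have h := Rat.den_dvd (a : ℤ) (q : ℤ)
  rw [Rat.divInt_eq_div] at h
  push_cast at h
  exact_mod_cast h

private lemma den_sum_dvd {ι : Type*} (s : Finset ι) (a : ι → ℚ) (n : ι → ℕ)
    (h : ∀ i ∈ s, (a i).den ∣ n i) : (∑ i ∈ s, a i).den ∣ ∏ i ∈ s, n i := by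
  classical
  induction s using Finset.induction with
  | empty => simp
  | @insert x s hx ih =>
    rw [Finset.sum_insert hx, Finset.prod_insert hx]
    exact (Rat.add_den_dvd _ _).trans
      (Nat.mul_dvd_mul (h _ (mem_insert_self _ _)) (ih fun i hi => h i (mem_insert_of_mem hi)))

private lemma den_split (S' S'' : ℚ) (Q' Q'' : ℕ) (h' : S'.den ∣ Q') (h'' : S''.den ∣ Q'')
    (hcop : Nat.Coprime Q' Q'') (h : (S' + S'').den = 1) :
    S'.den = 1 ∧ S''.den = 1 := by
  obtain ⟨n, hn⟩ : ∃ n : ℤ, S' + S'' = n := ⟨(S' + S'').num, ((S' + S'').den_eq_one_iff.mp h).symm⟩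
  have hdd : S'.den = S''.den := by
    have he : S' = -S'' + (n : ℚ) := by rw [← hn]; ring
    rw [he, den_add_intCast, Rat.neg_den]
  have h1 : S'.den ∣ Nat.gcd Q' Q'' := Nat.dvd_gcd h' (hdd ▸ h'')
  rw [hcop] at h1
  exact ⟨Nat.eq_one_of_dvd_one h1, hdd ▸ Nat.eq_one_of_dvd_one h1⟩

private lemma mod_shift (a q : ℕ) (hq : 0 < q) :
    ((a % q : ℕ) : ℚ) / (q : ℚ) = (a : ℚ) / (q : ℚ) + ((-(a / q : ℕ) : ℤ) : ℚ) := by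
  have h := Nat.div_add_mod a q
  have hq' : (q : ℚ) ≠ 0 := by positivity
  have h2 : ((a % q : ℕ) : ℚ) = (a : ℚ) - (q : ℚ) * ((a / q : ℕ) : ℚ) := by
    have := congrArg (fun n : ℕ => (n : ℚ)) h
    push_cast at this
    linarith
  rw [h2, Int.cast_neg, Int.cast_natCast]
  field_simp
  ring

private lemma isUnit_val_iff {n : ℕ} [NeZero n] (z : ZMod n) :
    Nat.Coprime z.val n ↔ IsUnit z := by
  have h : ((z.val : ℕ) : ZMod n) = z := ZMod.natCast_rightInverse z
  rw [← ZMod.isUnit_iff_coprime, h]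

noncomputable def HLAZ (k : ℕ) (d : Fin k → ℤ) (q : Fin k → ℕ) [∀ i, NeZero (q i)] : ℂ :=
  ∑ z ∈ Finset.univ.filter
      (fun z : ∀ i, ZMod (q i) =>
        (∀ i, Nat.Coprime (z i).val (q i)) ∧ (∑ i, ((z i).val : ℚ) / (q i : ℚ)).den = 1),
    Complex.exp (2 * Real.pi * Complex.I *
      ((∑ i, (d i : ℚ) * ((z i).val : ℚ) / (q i : ℚ) : ℚ) : ℂ))

private lemma val_cast_shift (a q : ℕ) (hq : 0 < q) :
    haveI : NeZero q := ⟨hq.ne'⟩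
    (((a : ZMod q)).val : ℚ) / (q : ℚ) = (a : ℚ) / (q : ℚ) + ((-(a / q : ℕ) : ℤ) : ℚ) := by
  rw [ZMod.val_natCast]
  exact mod_shift a q hq

private lemma HLA_eq_HLAZ (k : ℕ) (d : Fin k → ℤ) (q : Fin k → ℕ) (hq : ∀ i, 0 < q i) :
    haveI : ∀ i, NeZero (q i) := fun i => ⟨(hq i).ne'⟩
    HLA k d q = HLAZ k d q := by
  haveI : ∀ i, NeZero (q i) := fun i => ⟨(hq i).ne'⟩
  unfold HLA HLAZ
  refine Finset.sum_nbij' (i := fun a i => ((a i : ℕ) : ZMod (q i)))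
    (j := fun z i => if (z i).val = 0 then q i else (z i).val) ?_ ?_ ?_ ?_ ?_
  · -- maps to target
    intro a ha
    rw [Finset.mem_filter] at ha ⊢
    obtain ⟨ha0, ha1, ha2⟩ := ha
    refine ⟨Finset.mem_univ _, fun i => ?_, ?_⟩
    · show Nat.gcd ((a i : ZMod (q i)).val) (q i) = 1
      rw [ZMod.val_natCast, ← Nat.gcd_rec, Nat.gcd_comm]
      exact ha1 i
    · rw [den_shift _ (fun i => (a i : ℚ) / (q i : ℚ)) (fun i => (-(a i / q i : ℕ) : ℤ))
        (fun i => val_cast_shift (a i) (q i) (hq i))]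
      exact ha2
  · -- maps back to source
    intro z hz
    rw [Finset.mem_filter] at hz ⊢
    obtain ⟨-, hz1, hz2⟩ := hz
    refine ⟨Fintype.mem_piFinset.mpr fun i => ?_, fun i => ?_, ?_⟩
    · by_cases h : (z i).val = 0 <;> simp only [h, if_pos, if_neg, if_true, if_false]
      · exact Finset.mem_Icc.mpr ⟨hq i, le_refl _⟩
      · exact Finset.mem_Icc.mpr ⟨Nat.pos_of_ne_zero h, (ZMod.val_lt _).le⟩
    · by_cases h : (z i).val = 0
      · have hq1 : q i = 1 := by
          have := hz1 i
          rw [h] at this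
          exact Nat.coprime_zero_left _ |>.mp this
        simp [h, hq1]
      · simpa [h] using hz1 i
    · have hsh : ∀ i, (((if (z i).val = 0 then q i else (z i).val : ℕ)) : ℚ) / (q i : ℚ)
          = (((z i).val : ℕ) : ℚ) / (q i : ℚ) + ((if (z i).val = 0 then 1 else 0 : ℤ) : ℚ) := by
        intro i
        by_cases h : (z i).val = 0
        · have hq' : (q i : ℚ) ≠ 0 := by have := hq i; positivity
          simp [h, div_self hq']
        · simp [h]
      rw [den_shift _ _ _ hsh]
      exact hz2
  · -- left inverse
    intro a ha
    rw [Finset.mem_filter] at ha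
    funext i
    have hm := Finset.mem_Icc.mp (Fintype.mem_piFinset.mp ha.1 i)
    rcases eq_or_lt_of_le hm.2 with h | h
    · simp [ZMod.val_natCast, h, Nat.mod_self]
    · have : a i % q i = a i := Nat.mod_eq_of_lt h
      have hne : a i ≠ 0 := Nat.one_le_iff_ne_zero.mp hm.1
      simp [ZMod.val_natCast, this, hne]
  · -- right inverse
    intro z hz
    funext i
    by_cases h : (z i).val = 0
    · simp only [h, if_pos]
      rw [ZMod.natCast_self]
      exact ((ZMod.val_eq_zero _).mp h).symm
    · simp only [h, if_neg, if_false]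
      exact ZMod.natCast_rightInverse (z i)
  · -- values
    intro a ha
    have hcast : Complex.exp (2 * Real.pi * Complex.I * ∑ i, (d i : ℂ) * (a i : ℂ) / (q i : ℂ))
        = Complex.exp (2 * Real.pi * Complex.I *
            ((∑ i, (d i : ℚ) * (a i : ℚ) / (q i : ℚ) : ℚ) : ℂ)) := by
      congr 1
      push_cast
      ring
    rw [hcast]
    refine exp_shift_sum _ _ (fun i => d i * (a i / q i : ℕ)) fun i => ?_
    have h3 := val_cast_shift (a i) (q i) (hq i)
    rw [mul_div_assoc, mul_div_assoc, h3]
    push_cast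
    ring

private lemma coprime_mod_iff (a n : ℕ) : Nat.Coprime (a % n) n ↔ Nat.Coprime a n := by
  unfold Nat.Coprime
  rw [← Nat.gcd_rec, Nat.gcd_comm]

private lemma HLAZ_mult (k : ℕ) (d : Fin k → ℤ) (q' q'' : Fin k → ℕ)
    (hq' : ∀ i, 0 < q' i) (hq'' : ∀ i, 0 < q'' i)
    (hcop : Nat.Coprime (∏ i, q' i) (∏ i, q'' i)) :
    haveI : ∀ i, NeZero (q' i * q'' i) := fun i => ⟨(Nat.mul_pos (hq' i) (hq'' i)).ne'⟩
    haveI : ∀ i, NeZero (q' i) := fun i => ⟨(hq' i).ne'⟩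
    haveI : ∀ i, NeZero (q'' i) := fun i => ⟨(hq'' i).ne'⟩
    HLAZ k d (fun i => q' i * q'' i) = HLAZ k d q' * HLAZ k d q'' := by
  haveI : ∀ i, NeZero (q' i * q'' i) := fun i => ⟨(Nat.mul_pos (hq' i) (hq'' i)).ne'⟩
  haveI : ∀ i, NeZero (q' i) := fun i => ⟨(hq' i).ne'⟩
  haveI : ∀ i, NeZero (q'' i) := fun i => ⟨(hq'' i).ne'⟩
  have hc : ∀ i, Nat.Coprime (q' i) (q'' i) := fun i =>
    Nat.Coprime.coprime_dvd_left (Finset.dvd_prod_of_mem _ (Finset.mem_univ i))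
      (hcop.coprime_dvd_right (Finset.dvd_prod_of_mem _ (Finset.mem_univ i)))
  set φ : ((∀ i, ZMod (q' i)) × (∀ i, ZMod (q'' i))) → (∀ i, ZMod (q' i * q'' i)) :=
    fun p i => (((p.1 i).val * q'' i + (p.2 i).val * q' i : ℕ) : ZMod (q' i * q'' i)) with hφ
  have hinj : Function.Injective φ := by
    intro p r h
    have hcomp : ∀ i, φ p i = φ r i := fun i => congrFun h i
    refine Prod.ext (funext fun i => ?_) (funext fun i => ?_)
    · have h1 := congrArg (ZMod.castHom (dvd_mul_right (q' i) (q'' i)) (ZMod (q' i))) (hcomp i)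
      simp only [hφ, map_natCast] at h1
      push_cast at h1
      rw [ZMod.natCast_self] at h1
      simp only [mul_zero, add_zero] at h1
      rw [ZMod.natCast_rightInverse (p.1 i), ZMod.natCast_rightInverse (r.1 i)] at h1
      have hu : IsUnit ((q'' i : ℕ) : ZMod (q' i)) :=
        (ZMod.isUnit_iff_coprime _ _).mpr (hc i).symm
      rw [mul_comm (p.1 i) _, mul_comm (r.1 i) _] at h1
      exact hu.mul_left_cancel h1
    · have h1 := congrArg (ZMod.castHom (dvd_mul_left (q'' i) (q' i)) (ZMod (q'' i))) (hcomp i)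
      simp only [hφ, map_natCast] at h1
      push_cast at h1
      rw [ZMod.natCast_self] at h1
      simp only [mul_zero, zero_add] at h1
      rw [ZMod.natCast_rightInverse (p.2 i), ZMod.natCast_rightInverse (r.2 i)] at h1
      have hu : IsUnit ((q' i : ℕ) : ZMod (q'' i)) :=
        (ZMod.isUnit_iff_coprime _ _).mpr (hc i)
      rw [mul_comm (p.2 i) _, mul_comm (r.2 i) _] at h1
      exact hu.mul_left_cancel h1
  have hbij : Function.Bijective φ := by
    rw [Fintype.bijective_iff_injective_and_card]
    refine ⟨hinj, ?_⟩
    simp [Fintype.card_prod, Fintype.card_pi, ZMod.card, ← Finset.prod_mul_distrib]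
  have hsh : ∀ p : ((∀ i, ZMod (q' i)) × (∀ i, ZMod (q'' i))), ∀ i,
      (((φ p i).val : ℕ) : ℚ) / ((q' i * q'' i : ℕ) : ℚ)
        = ((((p.1 i).val : ℚ) / (q' i : ℚ) + (((p.2 i).val : ℚ)) / (q'' i : ℚ))
          + ((-((((p.1 i).val * q'' i + (p.2 i).val * q' i)) / (q' i * q'' i) : ℕ) : ℤ) : ℚ)) := by
    intro p i
    have h0 := val_cast_shift ((p.1 i).val * q'' i + (p.2 i).val * q' i) (q' i * q'' i)
      (Nat.mul_pos (hq' i) (hq'' i))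
    have h1 : ((((p.1 i).val * q'' i + (p.2 i).val * q' i : ℕ)) : ℚ) / ((q' i * q'' i : ℕ) : ℚ)
        = ((p.1 i).val : ℚ) / (q' i : ℚ) + (((p.2 i).val : ℚ)) / (q'' i : ℚ) := by
      have e1 : (q' i : ℚ) ≠ 0 := by have := hq' i; positivity
      have e2 : (q'' i : ℚ) ≠ 0 := by have := hq'' i; positivity
      push_cast
      field_simp
    rw [show φ p i = (((p.1 i).val * q'' i + (p.2 i).val * q' i : ℕ) : ZMod (q' i * q'' i)) from rfl,
      h0, h1]
  have hden : ∀ p : ((∀ i, ZMod (q' i)) × (∀ i, ZMod (q'' i))),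
      ((∑ i, ((φ p i).val : ℚ) / ((q' i * q'' i : ℕ) : ℚ)).den = 1 ↔
        ((∑ i, (((p.1 i).val : ℚ)) / (q' i : ℚ)).den = 1 ∧
          (∑ i, (((p.2 i).val : ℚ)) / (q'' i : ℚ)).den = 1)) := by
    intro p
    rw [den_shift _ _ _ (hsh p), Finset.sum_add_distrib]
    constructor
    · intro h
      exact den_split _ _ _ _
        (den_sum_dvd _ _ _ fun i _ => den_div_dvd _ _)
        (den_sum_dvd _ _ _ fun i _ => den_div_dvd _ _) hcop h
    · rintro ⟨h1, h2⟩
      rw [← Rat.coe_int_num_of_den_eq_one h1, ← Rat.coe_int_num_of_den_eq_one h2,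
        ← Int.cast_add, Rat.den_intCast]
  have hcp : ∀ p : ((∀ i, ZMod (q' i)) × (∀ i, ZMod (q'' i))),
      ((∀ i, Nat.Coprime ((φ p i)).val (q' i * q'' i)) ↔
        ((∀ i, Nat.Coprime ((p.1 i)).val (q' i)) ∧ (∀ i, Nat.Coprime ((p.2 i)).val (q'' i)))) := by
    intro p
    have hi : ∀ i, (Nat.Coprime ((φ p i)).val (q' i * q'' i) ↔
        Nat.Coprime (p.1 i).val (q' i) ∧ Nat.Coprime (p.2 i).val (q'' i)) := by
      intro i
      rw [show (φ p i).val = ((p.1 i).val * q'' i + (p.2 i).val * q' i) % (q' i * q'' i) from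
        ZMod.val_natCast _ _]
      rw [coprime_mod_iff, Nat.coprime_mul_iff_right]
      have h1 : Nat.Coprime ((p.1 i).val * q'' i + (p.2 i).val * q' i) (q' i) ↔
          Nat.Coprime (p.1 i).val (q' i) := by
        rw [Nat.coprime_add_mul_right_left, Nat.coprime_mul_iff_left]
        exact and_iff_left (hc i).symm
      have h2 : Nat.Coprime ((p.1 i).val * q'' i + (p.2 i).val * q' i) (q'' i) ↔
          Nat.Coprime (p.2 i).val (q'' i) := by
        rw [Nat.add_comm, Nat.coprime_add_mul_right_left, Nat.coprime_mul_iff_left]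
        exact and_iff_left (hc i)
      rw [h1, h2]
    exact ⟨fun h => ⟨fun i => ((hi i).mp (h i)).1, fun i => ((hi i).mp (h i)).2⟩,
      fun h i => (hi i).mpr ⟨h.1 i, h.2 i⟩⟩
  have hval : ∀ p : ((∀ i, ZMod (q' i)) × (∀ i, ZMod (q'' i))),
      Complex.exp (2 * Real.pi * Complex.I *
          ((∑ i, (d i : ℚ) * ((φ p i).val : ℚ) / ((q' i * q'' i : ℕ) : ℚ) : ℚ) : ℂ))
        = Complex.exp (2 * Real.pi * Complex.I *
            ((∑ i, (d i : ℚ) * (((p.1 i).val : ℚ)) / (q' i : ℚ) : ℚ) : ℂ)) *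
          Complex.exp (2 * Real.pi * Complex.I *
            ((∑ i, (d i : ℚ) * (((p.2 i).val : ℚ)) / (q'' i : ℚ) : ℚ) : ℂ)) := by
    intro p
    have hv : ∀ i, (d i : ℚ) * ((φ p i).val : ℚ) / ((q' i * q'' i : ℕ) : ℚ)
        = ((d i : ℚ) * (((p.1 i).val : ℚ)) / (q' i : ℚ)
            + (d i : ℚ) * (((p.2 i).val : ℚ)) / (q'' i : ℚ))
          + ((d i * -((((p.1 i).val * q'' i + (p.2 i).val * q' i)) / (q' i * q'' i) : ℕ) : ℤ) : ℚ) := by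
      intro i
      rw [mul_div_assoc, hsh p i]
      push_cast
      ring
    rw [exp_shift_sum _ _ _ hv, Finset.sum_add_distrib, Rat.cast_add, mul_add, Complex.exp_add]
  unfold HLAZ
  rw [Finset.sum_filter, Finset.sum_filter, Finset.sum_filter, Finset.sum_mul_sum]
  refine Eq.trans ?_ (Fintype.sum_prod_type
    (fun p : ((∀ i, ZMod (q' i)) × (∀ i, ZMod (q'' i))) =>
      (if (∀ i, Nat.Coprime ((p.1 i)).val (q' i)) ∧
          (∑ i, (((p.1 i).val : ℚ)) / (q' i : ℚ)).den = 1 then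
        Complex.exp (2 * Real.pi * Complex.I *
          ((∑ i, (d i : ℚ) * (((p.1 i).val : ℚ)) / (q' i : ℚ) : ℚ) : ℂ))
      else 0) *
      (if (∀ i, Nat.Coprime ((p.2 i)).val (q'' i)) ∧
          (∑ i, (((p.2 i).val : ℚ)) / (q'' i : ℚ)).den = 1 then
        Complex.exp (2 * Real.pi * Complex.I *
          ((∑ i, (d i : ℚ) * (((p.2 i).val : ℚ)) / (q'' i : ℚ) : ℚ) : ℂ))
      else 0)))
  refine (Fintype.sum_bijective φ hbij _ _ ?_).symm
  intro p
  by_cases hA : (∀ i, Nat.Coprime ((p.1 i)).val (q' i)) ∧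
      (∑ i, (((p.1 i).val : ℚ)) / (q' i : ℚ)).den = 1
  · by_cases hB : (∀ i, Nat.Coprime ((p.2 i)).val (q'' i)) ∧
        (∑ i, (((p.2 i).val : ℚ)) / (q'' i : ℚ)).den = 1
    · rw [if_pos hA, if_pos hB, if_pos (⟨(hcp p).mpr ⟨hA.1, hB.1⟩, (hden p).mpr ⟨hA.2, hB.2⟩⟩ :
        (∀ i, Nat.Coprime ((φ p i)).val (q' i * q'' i)) ∧
          (∑ i, ((φ p i).val : ℚ) / ((q' i * q'' i : ℕ) : ℚ)).den = 1)]
      exact (hval p).symm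
    · rw [if_neg hB, mul_zero, if_neg]
      intro hcontra
      exact hB ⟨((hcp p).mp hcontra.1).2, ((hden p).mp hcontra.2).2⟩
  · rw [if_neg hA, zero_mul, if_neg]
    intro hcontra
    exact hA ⟨((hcp p).mp hcontra.1).1, ((hden p).mp hcontra.2).1⟩

/-- Multiplicativity of `A` (Lemma 3, equation (35)). -/
theorem stmt_2 (k : ℕ) (d : Fin k → ℤ) (q q' q'' : Fin k → ℕ)
    (hq' : ∀ i, 0 < q' i) (hq'' : ∀ i, 0 < q'' i)
    (hfac : ∀ i, q i = q' i * q'' i)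
    (hcop : Nat.Coprime (∏ i, q' i) (∏ i, q'' i)) :
    HLA k d q = HLA k d q' * HLA k d q'' := by
  have hfq : q = fun i => q' i * q'' i := funext hfac
  subst hfq
  have hq : ∀ i, 0 < q' i * q'' i := fun i => Nat.mul_pos (hq' i) (hq'' i)
  rw [HLA_eq_HLAZ k d _ hq, HLA_eq_HLAZ k d q' hq', HLA_eq_HLAZ k d q'' hq'']
  exact HLAZ_mult k d q' q'' hq' hq'' hcop
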